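/- Let π be a signaling policy on a (possibly infinite) compact metric recommendation space X ⊆ Δ(E), with π_ω a Borel probability measure on X for each ω ∈ Ω, and assume all latency functions ℓ_e^ω are continuous. Then there exist a finite subset X̃ ⊆ X with |X̃| ≤ |Ω|·(|J|+2) (where J is the set of deviation pairs) and finitely supported measures π̃_ω ∈ Δ(X̃) such that C(π̃) = C(π) and A_{r,a}(π̃;μ) = A_{r,a}(π;μ) for all (r,a) ∈ J and all μ ∈ Δ(Ω). -/

import Mathlib

open Finset MeasureTheory


/-- Convex hull of a compact set in a finite-dimensional coordinate space is compact. -/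
lemma isCompact_convexHull_aux {κ : Type*} [Fintype κ] {K : Set (κ → ℝ)}
    (hK : IsCompact K) : IsCompact (convexHull ℝ K) := by
  classical
  rcases K.eq_empty_or_nonempty with rfl | ⟨k0, hk0⟩
  · simp
  set d := Fintype.card κ + 1 with hd
  set f : (Fin d → ℝ) × (Fin d → κ → ℝ) → (κ → ℝ) :=
    fun p => ∑ j : Fin d, p.1 j • p.2 j with hf
  have hfc : Continuous f := by
    apply continuous_finset_sum
    intro j _
    exact ((continuous_apply j).comp continuous_fst).smul
      ((continuous_apply j).comp continuous_snd)
  have hT : IsCompact ((stdSimplex ℝ (Fin d)) ×ˢ (Set.univ.pi fun _ : Fin d => K)) :=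
    IsCompact.prod (isCompact_stdSimplex ..) (isCompact_univ_pi fun _ => hK)
  have himg : f '' ((stdSimplex ℝ (Fin d)) ×ˢ (Set.univ.pi fun _ : Fin d => K))
      = convexHull ℝ K := by
    apply Set.Subset.antisymm
    · rintro _ ⟨⟨w, z⟩, ⟨hw, hz⟩, rfl⟩
      exact (convex_convexHull ℝ K).sum_mem (fun j _ => hw.1 j) hw.2
        (fun j _ => subset_convexHull ℝ K (hz j (Set.mem_univ j)))
    · intro x hx
      obtain ⟨ι, hι, z, w, hzK, hai, hwpos, hwsum, hwz⟩ :=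
        eq_pos_convex_span_of_mem_convexHull hx
      letI := hι
      have hcard : Fintype.card ι ≤ d := by
        have h1 := hai.card_le_finrank_succ
        have h2 : Module.finrank ℝ (vectorSpan ℝ (Set.range z)) ≤
            Module.finrank ℝ (κ → ℝ) := Submodule.finrank_le _
        have h3 : Module.finrank ℝ (κ → ℝ) = Fintype.card κ :=
          Module.finrank_fintype_fun_eq_card ℝ
        omega
      obtain ⟨e⟩ := Function.Embedding.nonempty_of_card_le
        (by simpa using hcard : Fintype.card ι ≤ Fintype.card (Fin d))
      set w' : Fin d → ℝ := fun j => ∑ i ∈ Finset.univ.filter (fun i => e i = j), w i with hw'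
      set z' : Fin d → κ → ℝ :=
        fun j => if h : ∃ i, e i = j then z h.choose else k0 with hz'
      refine ⟨⟨w', z'⟩, ⟨⟨fun j => Finset.sum_nonneg fun i _ => (hwpos i).le, ?_⟩, ?_⟩, ?_⟩
      · rw [Finset.sum_fiberwise_of_maps_to (fun i _ => Finset.mem_univ (e i))]
        exact hwsum
      · intro j _
        simp only [hz']
        split_ifs with h
        · exact hzK (Set.mem_range_self _)
        · exact hk0
      · show ∑ j : Fin d, w' j • z' j = x
        rw [← hwz,
          ← Finset.sum_fiberwise_of_maps_to (fun i (_ : i ∈ Finset.univ) => Finset.mem_univ (e i))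
            (fun i => w i • z i)]
        refine Finset.sum_congr rfl fun j _ => ?_
        rw [hw', Finset.sum_smul]
        refine Finset.sum_congr rfl fun i hi => ?_
        have hei : e i = j := (Finset.mem_filter.mp hi).2
        have hex : ∃ i', e i' = j := ⟨i, hei⟩
        have : hex.choose = i := e.injective (hex.choose_spec.trans hei.symm)
        simp only [hz', dif_pos hex, this]
  rw [← himg]
  exact hT.image hfc

/-- The vector-valued map `Γ^ω` collecting the cost and all deviation regrets. -/
def Gam {Ω E : Type*} [Fintype E] (ℓ : Ω → E → ℝ → ℝ) (ω : Ω) (x : E → ℝ) :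
    Option {p : E × E // p.1 ≠ p.2} → ℝ := fun i =>
  i.elim (∑ e, x e * ℓ ω e (x e))
    (fun p => x p.1.1 * (ℓ ω p.1.2 (x p.1.2) - ℓ ω p.1.1 (x p.1.1)))

theorem finite_support_reduction
    {Ω E : Type*} [Fintype Ω] [Fintype E] [DecidableEq E]
    (X : Set (E → ℝ)) (hXc : IsCompact X) (hXm : MeasurableSet X)
    (hXflow : ∀ x ∈ X, (∀ e, 0 ≤ x e) ∧ ∑ e, x e = 1)
    (ℓ : Ω → E → ℝ → ℝ) (hℓ : ∀ ω e, Continuous (ℓ ω e))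
    (π : Ω → Measure (E → ℝ))
    (hπ : ∀ ω, IsProbabilityMeasure (π ω))
    (hπX : ∀ ω, π ω X = 1)
    (μ₀ : Ω → ℝ) (hμ₀ : (∀ ω, 0 ≤ μ₀ ω) ∧ ∑ ω, μ₀ ω = 1) :
    ∃ Xt : Finset (E → ℝ), ↑Xt ⊆ X ∧
      Xt.card ≤ Fintype.card Ω *
        (({p : E × E | p.1 ≠ p.2}.toFinset.card) + 2) ∧
      ∃ πt : Ω → (E → ℝ) → ℝ,
        (∀ ω x, 0 ≤ πt ω x) ∧
        (∀ ω, ∑ x ∈ Xt, πt ω x = 1) ∧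
        (∑ ω, μ₀ ω * ∑ x ∈ Xt, πt ω x * (∑ e, x e * ℓ ω e (x e))
          = ∑ ω, μ₀ ω * ∫ x, (∑ e, x e * ℓ ω e (x e)) ∂(π ω)) ∧
        (∀ (μ : Ω → ℝ) (r a : E), r ≠ a →
          ∑ ω, μ ω * ∑ x ∈ Xt, πt ω x * (x r * (ℓ ω a (x a) - ℓ ω r (x r)))
            = ∑ ω, μ ω * ∫ x, x r * (ℓ ω a (x a) - ℓ ω r (x r)) ∂(π ω)) := by
  classical
  set J := {p : E × E // p.1 ≠ p.2}
  -- Continuity of Γ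
  have hΓc : ∀ ω, Continuous (Gam ℓ ω) := by
    intro ω
    apply continuous_pi
    rintro (_ | p)
    · exact continuous_finset_sum _ fun e _ =>
        (continuous_apply e).mul ((hℓ ω e).comp (continuous_apply e))
    · exact (continuous_apply p.1.1).mul
        (((hℓ ω p.1.2).comp (continuous_apply p.1.2)).sub
          ((hℓ ω p.1.1).comp (continuous_apply p.1.1)))
  -- a.e. membership in X and integrability
  have hae : ∀ ω, ∀ᵐ x ∂(π ω), x ∈ X := by
    intro ω
    haveI := hπ ω
    have hc : π ω Xᶜ = 0 := by
      rw [measure_compl hXm (by simp), hπX ω, measure_univ, tsub_self]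
    rw [MeasureTheory.ae_iff]
    exact hc
  have hrestrict : ∀ ω, (π ω).restrict X = π ω := fun ω =>
    Measure.restrict_eq_self_of_ae_mem (hae ω)
  have hInt : ∀ ω, Integrable (Gam ℓ ω) (π ω) := by
    intro ω
    haveI := hπ ω
    have := ((hΓc ω).continuousOn).integrableOn_compact (μ := π ω) hXc
    rwa [IntegrableOn, hrestrict ω] at this
  -- per-ω finite-support representation
  have key : ∀ ω : Ω, ∃ (S : Finset (E → ℝ)) (q : (E → ℝ) → ℝ),
      ↑S ⊆ X ∧ S.card ≤ Fintype.card J + 2 ∧ (∀ y, 0 ≤ q y) ∧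
      (∀ y ∉ S, q y = 0) ∧ (∑ y ∈ S, q y = 1) ∧
      ∀ i, ∑ y ∈ S, q y * Gam ℓ ω y i = ∫ x, Gam ℓ ω x i ∂(π ω) := by
    intro ω
    haveI := hπ ω
    have hcpt : IsCompact (Gam ℓ ω '' X) := hXc.image (hΓc ω)
    have hconvcpt : IsCompact (convexHull ℝ (Gam ℓ ω '' X)) := isCompact_convexHull_aux hcpt
    have hb : (∫ x, Gam ℓ ω x ∂(π ω)) ∈ convexHull ℝ (Gam ℓ ω '' X) := by
      refine Convex.integral_mem (convex_convexHull _ _) hconvcpt.isClosed ?_ (hInt ω)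
      filter_upwards [hae ω] with x hx
      exact subset_convexHull _ _ (Set.mem_image_of_mem _ hx)
    obtain ⟨ι, hι, z, w, hzX, hai, hwpos, hwsum, hwz⟩ :=
      eq_pos_convex_span_of_mem_convexHull hb
    letI := hι
    -- card bound
    have hcard : Fintype.card ι ≤ Fintype.card J + 2 := by
      have h1 := hai.card_le_finrank_succ
      have h2 : Module.finrank ℝ (vectorSpan ℝ (Set.range z)) ≤
          Module.finrank ℝ (Option J → ℝ) := Submodule.finrank_le _
      have h3 : Module.finrank ℝ (Option J → ℝ) = Fintype.card J + 1 := by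
        rw [Module.finrank_fintype_fun_eq_card, Fintype.card_option]
      omega
    -- pull back to X
    have hchoice : ∀ i : ι, ∃ x ∈ X, Gam ℓ ω x = z i := by
      intro i
      obtain ⟨x, hx, hxz⟩ := hzX (Set.mem_range_self i)
      exact ⟨x, hx, hxz⟩
    choose xh hxhX hxhz using hchoice
    refine ⟨Finset.univ.image xh,
      fun y => ∑ i ∈ Finset.univ.filter (fun i => xh i = y), w i, ?_, ?_, ?_, ?_, ?_, ?_⟩
    · intro y hy
      simp only [coe_image, Set.mem_image] at hy
      obtain ⟨i, _, rfl⟩ := hy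
      exact hxhX i
    · exact le_trans (Finset.card_image_le.trans (by simp)) hcard
    · exact fun y => Finset.sum_nonneg fun i _ => (hwpos i).le
    · intro y hy
      refine Finset.sum_eq_zero fun i hi => ?_
      exact (hy ((Finset.mem_filter.mp hi).2 ▸
        Finset.mem_image_of_mem xh (mem_univ i))).elim
    · rw [Finset.sum_fiberwise_of_maps_to (fun i _ => Finset.mem_image_of_mem xh (mem_univ i))]
      exact hwsum
    · intro ii
      have hL : ∑ y ∈ Finset.univ.image xh,
          (∑ i ∈ Finset.univ.filter (fun i => xh i = y), w i) * Gam ℓ ω y ii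
          = ∑ i, w i * Gam ℓ ω (xh i) ii := by
        rw [← Finset.sum_fiberwise_of_maps_to
          (fun i _ => Finset.mem_image_of_mem xh (mem_univ i))
          (fun i => w i * Gam ℓ ω (xh i) ii)]
        refine Finset.sum_congr rfl fun y _ => ?_
        rw [Finset.sum_mul]
        refine Finset.sum_congr rfl fun i hi => ?_
        rw [(Finset.mem_filter.mp hi).2]
      rw [hL]
      have hR : (∫ x, Gam ℓ ω x ∂(π ω)) ii = ∫ x, Gam ℓ ω x ii ∂(π ω) := by
        have := (ContinuousLinearMap.proj (R := ℝ) (φ := fun _ : Option J => ℝ) ii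
          ).integral_comp_comm (hInt ω)
        simpa using this.symm
      rw [← hR, ← hwz]
      simp only [Finset.sum_apply, Pi.smul_apply, smul_eq_mul]
      refine Finset.sum_congr rfl fun i _ => ?_
      rw [hxhz i]
  choose S q hSX hScard hq0 hqz hq1 hqΓ using key
  refine ⟨Finset.univ.biUnion S, ?_, ?_, q, fun ω x => hq0 ω x, ?_, ?_, ?_⟩
  · intro y hy
    simp only [coe_biUnion, Set.mem_iUnion, mem_coe] at hy
    obtain ⟨ω, _, hω⟩ := hy
    exact hSX ω hω
  · refine le_trans (Finset.card_biUnion_le) ?_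
    rw [Set.toFinset_card]
    calc ∑ ω : Ω, (S ω).card ≤ ∑ _ω : Ω, (Fintype.card J + 2) :=
          Finset.sum_le_sum fun ω _ => hScard ω
      _ = Fintype.card Ω * (Fintype.card J + 2) := by
          rw [Finset.sum_const, card_univ, smul_eq_mul]
  · intro ω
    rw [← hq1 ω]
    exact (Finset.sum_subset (Finset.subset_biUnion_of_mem S (mem_univ ω))
      fun y _ hy => hqz ω y hy).symm
  · refine Finset.sum_congr rfl fun ω _ => ?_
    congr 1
    have hsub : ∑ x ∈ Finset.univ.biUnion S, q ω x * (∑ e, x e * ℓ ω e (x e))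
        = ∑ x ∈ S ω, q ω x * (∑ e, x e * ℓ ω e (x e)) :=
      (Finset.sum_subset (Finset.subset_biUnion_of_mem S (mem_univ ω))
        fun y _ hy => by rw [hqz ω y hy, zero_mul]).symm
    rw [hsub]
    exact hqΓ ω none
  · intro μ r a hra
    refine Finset.sum_congr rfl fun ω _ => ?_
    congr 1
    have hsub : ∑ x ∈ Finset.univ.biUnion S, q ω x * (x r * (ℓ ω a (x a) - ℓ ω r (x r)))
        = ∑ x ∈ S ω, q ω x * (x r * (ℓ ω a (x a) - ℓ ω r (x r))) :=
      (Finset.sum_subset (Finset.subset_biUnion_of_mem S (mem_univ ω))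
        fun y _ hy => by rw [hqz ω y hy, zero_mul]).symm
    rw [hsub]
    exact hqΓ ω (some ⟨(r, a), hra⟩)
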